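/- Let θ : {−1,1}ⁿ → ℝ, φ : {−1,1}^m → ℝ, ψ : {−1,1}^p → ℝ be any functions. The dual block composition is associative: (θ ⋆ φ) ⋆ ψ = θ ⋆ (φ ⋆ ψ) as functions on {−1,1}^{n·m·p}. -/

import Mathlib

/-- The dual block composition of `θ : {-1,1}^α → ℝ` and `φ : {-1,1}^β → ℝ`, as a
function on `{-1,1}^{α×β}`.  `true` encodes `-1`, and `sgn r = -1` iff `r < 0`, so the
bit fed to `θ` in block `i` is `true` iff `φ` is negative on that block. -/
noncomputable def dbc {α β : Type} [Fintype α] [Fintype β]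
    (θ : (α → Bool) → ℝ) (φ : (β → Bool) → ℝ) : (α × β → Bool) → ℝ :=
  fun x =>
    2 ^ Fintype.card α * θ (fun i => decide (φ (fun j => x (i, j)) < 0)) *
      ∏ i, |φ (fun j => x (i, j))|

/-- Dual block composition is associative: `(θ ⋆ φ) ⋆ ψ = θ ⋆ (φ ⋆ ψ)` (after the obvious
reindexing `(n × m) × p ≃ n × (m × p)` of the input bits). -/
theorem dbc_assoc (n m p : ℕ)
    (θ : (Fin n → Bool) → ℝ) (φ : (Fin m → Bool) → ℝ) (ψ : (Fin p → Bool) → ℝ)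
    (x : Fin n × Fin m × Fin p → Bool) :
    dbc (dbc θ φ) ψ (fun q => x (q.1.1, q.1.2, q.2)) = dbc θ (dbc φ ψ) x := by
  classical
  set g : Fin n → Fin m → ℝ := fun i j => ψ (fun k => x (i, j, k)) with hg
  set S : Fin n → Fin m → Bool := fun i j => decide (g i j < 0) with hS
  set P : Fin n → ℝ := fun i => ∏ j, |g i j| with hP
  simp only [dbc, Fintype.card_prod, Fintype.card_fin]
  -- rewrite the product over pairs as an iterated product
  rw [Fintype.prod_prod_type]
  by_cases hz : ∀ i j, g i j ≠ 0
  · have hPpos : ∀ i, 0 < P i := fun i =>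
      Finset.prod_pos (fun j _ => abs_pos.2 (hz i j))
    have hdec : ∀ i, decide ((2:ℝ) ^ m * φ (fun j => S i j) * P i < 0)
        = decide (φ (fun j => S i j) < 0) := by
      intro i
      have h2 : (0:ℝ) < 2 ^ m := by positivity
      have : ((2:ℝ) ^ m * φ (fun j => S i j) * P i < 0) ↔ (φ (fun j => S i j) < 0) := by
        constructor
        · intro h
          by_contra hc
          push_neg at hc
          nlinarith [mul_nonneg (mul_nonneg h2.le hc) (hPpos i).le]
        · intro h
          exact mul_neg_of_neg_of_pos (mul_neg_of_pos_of_neg h2 h) (hPpos i)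
      simp [this]
    have habs : ∀ i, |(2:ℝ) ^ m * φ (fun j => S i j) * P i|
        = 2 ^ m * |φ (fun j => S i j)| * P i := by
      intro i
      rw [abs_mul, abs_mul, abs_of_pos (by positivity : (0:ℝ) < (2:ℝ)^m),
        abs_of_pos (hPpos i)]
    simp only [hS, hP, hg] at hdec habs
    simp only [hdec, habs]
    rw [Finset.prod_mul_distrib, Finset.prod_mul_distrib, Finset.prod_const]
    simp only [Finset.card_univ, Fintype.card_fin]
    ring_nf
  · push_neg at hz
    obtain ⟨i₀, j₀, h0⟩ := hz
    have h1 : ∏ i, ∏ j, |g i j| = 0 := by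
      apply Finset.prod_eq_zero (Finset.mem_univ i₀)
      apply Finset.prod_eq_zero (Finset.mem_univ j₀)
      simp [h0]
    have h2 : P i₀ = 0 := by
      apply Finset.prod_eq_zero (Finset.mem_univ j₀)
      simp [h0]
    rw [h1]
    have h3 : ∏ i, |(2:ℝ) ^ m * φ (fun j => S i j) * P i| = 0 := by
      apply Finset.prod_eq_zero (Finset.mem_univ i₀)
      simp [h2]
    rw [h3]
    ring
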